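/- Let q be a prime power and A = F_q[T]. The group SL₂(A) is not finitely generated. -/

import Mathlib

open Matrix Polynomial

namespace Sl2NotFG

variable {K : Type*} [Field K]

/-- Uniqueness of polynomial division: if `deg r < deg x` then `x*q + r` has
quotient `q` and remainder `r` when divided by `x`. -/
lemma divmod_spec {x : K[X]} (hx : x ≠ 0) (q r : K[X]) (h : degree r < degree x) :
    (x * q + r) / x = q ∧ (x * q + r) % x = r := by
  have e := EuclideanDomain.div_add_mod (x * q + r) x
  have hm : degree ((x * q + r) % x) < degree x := EuclideanDomain.mod_lt _ hx
  have hq : (x * q + r) / x = q := by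
    by_contra hne
    have h1 : x * ((x * q + r) / x - q) = r - (x * q + r) % x := by
      ring_nf; linear_combination e
    have h2 : degree (x * ((x * q + r) / x - q)) < degree x :=
      h1 ▸ lt_of_le_of_lt (degree_sub_le _ _) (max_lt h hm)
    rw [degree_mul] at h2
    have : (0 : WithBot ℕ) ≤ degree ((x * q + r) / x - q) :=
      zero_le_degree_iff.2 (sub_ne_zero.2 hne)
    exact absurd h2 (not_lt.2 (le_add_of_nonneg_right this))
  refine ⟨hq, ?_⟩
  rw [hq] at e
  exact (add_left_cancel e)

open scoped Classical in
/-- All partial quotients in the Euclidean algorithm on the pair `(x, y)`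
have degree at most `n`. -/
def Qcf (n : ℕ) (x y : K[X]) : Prop :=
  if hx : x = 0 then True
  else if hy : y = 0 then True
  else if hlt : degree y < degree x then Qcf n y x
  else if hc : natDegree x = 0 then degree y ≤ (n : WithBot ℕ)
  else degree (y / x) ≤ (n : WithBot ℕ) ∧ Qcf n (y % x) x
termination_by natDegree x
decreasing_by
  · exact natDegree_lt_natDegree hy hlt
  · rcases eq_or_ne (y % x) 0 with h | h
    · simpa [h] using Nat.pos_of_ne_zero hc
    · exact natDegree_lt_natDegree h (EuclideanDomain.mod_lt _ hx)

lemma qcf_zero_left (n : ℕ) (y : K[X]) : Qcf n 0 y := by rw [Qcf]; simp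

lemma qcf_zero_right (n : ℕ) (x : K[X]) : Qcf n x 0 := by
  rw [Qcf]; by_cases hx : x = 0 <;> simp [hx]

lemma qcf_swap_of_lt {n : ℕ} {x y : K[X]} (hx : x ≠ 0) (hy : y ≠ 0)
    (h : degree y < degree x) : Qcf n x y ↔ Qcf n y x := by
  rw [Qcf]; simp [hx, hy, h]

lemma degree_nonneg_of_ne_zero {y : K[X]} (hy : y ≠ 0) : (0 : WithBot ℕ) ≤ degree y :=
  zero_le_degree_iff.2 hy

lemma qcf_const {n : ℕ} {x y : K[X]} (hx : x ≠ 0) (h0 : natDegree x = 0) (hy : y ≠ 0) :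
    Qcf n x y ↔ degree y ≤ (n : WithBot ℕ) := by
  have hdx : degree x = 0 := by rw [degree_eq_natDegree hx, h0]; rfl
  have hnlt : ¬ degree y < degree x := by
    rw [hdx]; exact not_lt.2 (degree_nonneg_of_ne_zero hy)
  rw [Qcf]; simp [hx, hy, hnlt, h0]

lemma qcf_main {n : ℕ} {x y : K[X]} (hx : x ≠ 0) (h0 : natDegree x ≠ 0) (hy : y ≠ 0)
    (hnlt : ¬ degree y < degree x) :
    Qcf n x y ↔ degree (y / x) ≤ (n : WithBot ℕ) ∧ Qcf n (y % x) x := by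
  rw [Qcf]; simp [hx, hy, hnlt, h0]

/-- Key step: if `z = x*q + r` with `deg q ≤ n`, `deg r < deg x` and `Qcf n r x`,
then `Qcf n x z`. -/
lemma qcf_of_decomp {n : ℕ} {x q r z : K[X]} (hx : x ≠ 0) (hz : z = x * q + r)
    (hq : degree q ≤ (n : WithBot ℕ)) (hr : degree r < degree x) (h : Qcf n r x) :
    Qcf n x z := by
  rcases eq_or_ne z 0 with rfl | hz0
  · exact qcf_zero_right n x
  rcases eq_or_ne q 0 with rfl | hq0
  · have hzr : z = r := by rw [hz, mul_zero, zero_add]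
    subst hzr
    exact (qcf_swap_of_lt hx hz0 hr).2 h
  · have hds := divmod_spec hx q r hr
    have hdxq : degree (x * q) = degree x + degree q := degree_mul
    have hrlt : degree r < degree (x * q) := by
      rw [hdxq]
      exact lt_of_lt_of_le hr (le_add_of_nonneg_right (degree_nonneg_of_ne_zero hq0))
    have hdz : degree z = degree x + degree q := by
      rw [hz, degree_add_eq_left_of_degree_lt hrlt, hdxq]
    have hnlt : ¬ degree z < degree x := by
      rw [hdz]
      exact not_lt.2 (le_add_of_nonneg_right (degree_nonneg_of_ne_zero hq0))
    by_cases h0 : natDegree x = 0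
    · have hdx : degree x = 0 := by rw [degree_eq_natDegree hx, h0]; rfl
      rw [qcf_const hx h0 hz0, hdz, hdx, zero_add]
      exact hq
    · rw [qcf_main hx h0 hz0 hnlt, hz, hds.1, hds.2]
      exact ⟨hq, h⟩

lemma qcf_smul_aux (n : ℕ) : ∀ (k : ℕ) {x y : K[X]} (c c' : K), c ≠ 0 → c' ≠ 0 →
    natDegree x = k → Qcf n x y → Qcf n (C c * x) (C c' * y) := by
  intro k
  induction k using Nat.strong_induction_on with
  | _ k IH =>
    intro x y c c' hc hc' hk h
    rcases eq_or_ne x 0 with rfl | hx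
    · rw [mul_zero]; exact qcf_zero_left n _
    rcases eq_or_ne y 0 with rfl | hy
    · rw [mul_zero]; exact qcf_zero_right n _
    have hCc : (C c : K[X]) ≠ 0 := by simpa using hc
    have hCc' : (C c' : K[X]) ≠ 0 := by simpa using hc'
    have hcx : C c * x ≠ 0 := mul_ne_zero hCc hx
    have hcy : C c' * y ≠ 0 := mul_ne_zero hCc' hy
    have dCx : degree (C c * x) = degree x := degree_C_mul hc
    have dCy : degree (C c' * y) = degree y := degree_C_mul hc'
    by_cases hlt : degree y < degree x
    · have h' := (qcf_swap_of_lt hx hy hlt).1 h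
      have hlt' : natDegree y < k := hk ▸ natDegree_lt_natDegree hy hlt
      have := IH _ hlt' c' c hc' hc rfl h'
      exact (qcf_swap_of_lt hcx hcy (by rw [dCx, dCy]; exact hlt)).2 this
    by_cases h0 : natDegree x = 0
    · have hN : natDegree (C c * x) = 0 := (natDegree_eq_of_degree_eq dCx).trans h0
      rw [qcf_const hcx hN hcy, dCy]
      exact (qcf_const hx h0 hy).1 h
    · obtain ⟨h1, h2⟩ := (qcf_main hx h0 hy hlt).1 h
      have e := EuclideanDomain.div_add_mod y x
      have hCC : (C c : K[X]) * C (c' * c⁻¹) = C c' := by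
        rw [← C_mul]; congr 1; field_simp
      have key : C c' * y = (C c * x) * (C (c' * c⁻¹) * (y / x)) + C c' * (y % x) := by
        calc C c' * y = C c' * (x * (y / x) + y % x) := by rw [e]
        _ = (C c' * x) * (y / x) + C c' * (y % x) := by ring
        _ = ((C c * C (c' * c⁻¹)) * x) * (y / x) + C c' * (y % x) := by rw [hCC]
        _ = (C c * x) * (C (c' * c⁻¹) * (y / x)) + C c' * (y % x) := by ring
      have hmodlt : degree (C c' * (y % x)) < degree (C c * x) := by
        rw [degree_C_mul hc', dCx]
        exact EuclideanDomain.mod_lt _ hx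
      have hds := divmod_spec hcx (C (c' * c⁻¹) * (y / x)) (C c' * (y % x)) hmodlt
      have hnlt' : ¬ degree (C c' * y) < degree (C c * x) := by rw [dCx, dCy]; exact hlt
      have hN0 : natDegree (C c * x) ≠ 0 := fun hh =>
        h0 ((natDegree_eq_of_degree_eq dCx.symm).trans hh)
      rw [qcf_main hcx hN0 hcy hnlt', key, hds.1, hds.2]
      constructor
      · rw [degree_C_mul (mul_ne_zero hc' (inv_ne_zero hc))]; exact h1
      · rcases eq_or_ne (y % x) 0 with hz | hz
        · rw [hz, mul_zero]; exact qcf_zero_left n _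
        · exact IH _ (hk ▸ natDegree_lt_natDegree hz (EuclideanDomain.mod_lt _ hx))
            c' c hc' hc rfl h2

/-- Scaling both arguments by nonzero constants preserves `Qcf`. -/
lemma qcf_smul {n : ℕ} {c c' : K} (hc : c ≠ 0) (hc' : c' ≠ 0) {x y : K[X]}
    (h : Qcf n x y) : Qcf n (C c * x) (C c' * y) :=
  qcf_smul_aux n (natDegree x) c c' hc hc' rfl h

lemma qcf_smul_left {n : ℕ} {c : K} (hc : c ≠ 0) {x y : K[X]}
    (h : Qcf n x y) : Qcf n (C c * x) y := by
  have := qcf_smul hc one_ne_zero h (c' := 1)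
  simpa using this

lemma qcf_smul_right {n : ℕ} {c' : K} (hc' : c' ≠ 0) {x y : K[X]}
    (h : Qcf n x y) : Qcf n x (C c' * y) := by
  have := qcf_smul one_ne_zero hc' h (c := 1)
  simpa using this

/-- Adding a multiple of `x` of small quotient degree (and scaling) preserves `Qcf`. -/
lemma qcf_addmul {n : ℕ} {x y f : K[X]} {c' : K} (hc' : c' ≠ 0)
    (hf : degree f ≤ (n : WithBot ℕ)) (h : Qcf n x y) :
    Qcf n x (x * f + C c' * y) := by
  rcases eq_or_ne x 0 with rfl | hx
  · exact qcf_zero_left n _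
  have hbot : degree (0 : K[X]) < degree x := by
    rw [degree_zero]; exact bot_lt_iff_ne_bot.2 (by simpa using hx)
  rcases eq_or_ne y 0 with rfl | hy
  · exact qcf_of_decomp hx (by rw [mul_zero, add_zero]) hf hbot (qcf_zero_left n x)
  by_cases hlt : degree y < degree x
  · have h' := (qcf_swap_of_lt hx hy hlt).1 h
    refine qcf_of_decomp hx rfl hf ?_ ?_
    · rw [degree_C_mul hc']; exact hlt
    · exact qcf_smul_left hc' h'
  by_cases h0 : natDegree x = 0
  · have hu : x = C (x.coeff 0) := eq_C_of_natDegree_eq_zero h0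
    have hu0 : x.coeff 0 ≠ 0 := fun hh => hx (by rw [hu, hh, map_zero])
    have hdy : degree y ≤ (n : WithBot ℕ) := (qcf_const hx h0 hy).1 h
    refine qcf_of_decomp hx (q := f + C (c' * (x.coeff 0)⁻¹) * y) (r := 0) ?_ ?_ hbot
      (qcf_zero_left n x)
    · rw [add_zero, mul_add]
      congr 1
      calc C c' * y = (C (x.coeff 0) * C (c' * (x.coeff 0)⁻¹)) * y := by
            rw [← C_mul]; congr 1; field_simp
        _ = x * (C (c' * (x.coeff 0)⁻¹) * y) := by rw [← hu]; ring
    · exact le_trans (degree_add_le _ _) (max_le hf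
        (by rw [degree_C_mul (mul_ne_zero hc' (inv_ne_zero hu0))]; exact hdy))
  · obtain ⟨h1, h2⟩ := (qcf_main hx h0 hy hlt).1 h
    have e := EuclideanDomain.div_add_mod y x
    refine qcf_of_decomp hx (q := f + C c' * (y / x)) (r := C c' * (y % x)) ?_ ?_ ?_ ?_
    · calc x * f + C c' * y = x * f + C c' * (x * (y / x) + y % x) := by rw [e]
        _ = x * (f + C c' * (y / x)) + C c' * (y % x) := by ring
    · exact le_trans (degree_add_le _ _) (max_le hf
        (by rw [degree_C_mul hc']; exact h1))
    · rw [degree_C_mul hc']; exact EuclideanDomain.mod_lt _ hx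
    · exact qcf_smul_left hc' h2

lemma zero_le_coe_nat {n : ℕ} : (0 : WithBot ℕ) ≤ (n : WithBot ℕ) := by
  exact_mod_cast Nat.zero_le n

lemma qcf_symm {n : ℕ} {x y : K[X]} (h : Qcf n x y) : Qcf n y x := by
  rcases eq_or_ne x 0 with rfl | hx
  · exact qcf_zero_right n y
  rcases eq_or_ne y 0 with rfl | hy
  · exact qcf_zero_left n x
  rcases lt_trichotomy (degree y) (degree x) with hlt | heq | hgt
  · exact (qcf_swap_of_lt hx hy hlt).1 h
  · -- equal degrees
    by_cases h0 : natDegree x = 0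
    · have h0y : natDegree y = 0 := (natDegree_eq_of_degree_eq heq).trans h0
      have hdy : degree x = 0 := by rw [degree_eq_natDegree hx, h0]; rfl
      rw [qcf_const hy h0y hx, hdy]
      exact zero_le_coe_nat
    · have h0y : natDegree y ≠ 0 := fun hh => h0 ((natDegree_eq_of_degree_eq heq.symm).trans hh)
      have hnlt : ¬ degree y < degree x := by rw [heq]; exact lt_irrefl _
      have hnlt' : ¬ degree x < degree y := by rw [heq]; exact lt_irrefl _
      obtain ⟨h1, h2⟩ := (qcf_main hx h0 hy hnlt).1 h
      -- q := y / x is a nonzero constant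
      have hq0 : y / x ≠ 0 := fun hh => hnlt ((Polynomial.div_eq_zero_iff hx).1 hh)
      have hdq : degree x + degree (y / x) = degree y := degree_add_div hx heq.ge
      have hdq0 : degree (y / x) = 0 := by
        have : degree x + degree (y / x) = degree x + 0 := by
          rw [add_zero, hdq, heq]
        exact (WithBot.add_left_inj (by simpa using hx)).1 this
      have hqn : natDegree (y / x) = 0 := natDegree_eq_zero_iff_degree_le_zero.2 (le_of_eq hdq0)
      set q0 : K := (y / x).coeff 0 with hq0def
      have hqC : y / x = C q0 := eq_C_of_natDegree_eq_zero hqn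
      have hq00 : q0 ≠ 0 := fun hh => hq0 (by rw [hqC, hh, map_zero])
      have e := EuclideanDomain.div_add_mod y x  -- x * (y/x) + y % x = y
      rw [qcf_main hy h0y hx hnlt']
      rcases eq_or_ne (y % x) 0 with hr0 | hr0
      · -- y = C q0 * x, so x % y = 0 and x / y = C q0⁻¹
        have hyx : y = C q0 * x := by rw [← e, hr0, add_zero, hqC]; ring
        have hds := divmod_spec hy (C q0⁻¹) 0
          (by rw [degree_zero]; exact bot_lt_iff_ne_bot.2 (by simpa using hy))
        have hxe : x = y * C q0⁻¹ + 0 := by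
          rw [add_zero, hyx]
          calc x = (C q0 * C q0⁻¹) * x := by rw [← C_mul, mul_inv_cancel₀ hq00]; simp
            _ = C q0 * x * C q0⁻¹ := by ring
        rw [hxe, hds.1, hds.2]
        refine ⟨by rw [degree_C (inv_ne_zero hq00)]; exact zero_le_coe_nat, qcf_zero_left n y⟩
      · -- r := y % x ≠ 0
        have hDrx : Qcf n (y % x) y := by
          have := qcf_addmul (f := 1) (c' := q0) hq00
            (by rw [degree_one]; exact zero_le_coe_nat) h2
          have hyeq : (y % x) * 1 + C q0 * x = y := by
            rw [mul_one, ← hqC]; linear_combination e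
          rwa [hyeq] at this
        -- x % y = C (-q0⁻¹) * (y % x), x / y = C q0⁻¹
        have hmodlt : degree (C (-q0⁻¹) * (y % x)) < degree y := by
          rw [degree_C_mul (neg_ne_zero.2 (inv_ne_zero hq00)), heq]
          exact EuclideanDomain.mod_lt _ hx
        have hds := divmod_spec hy (C q0⁻¹) (C (-q0⁻¹) * (y % x)) hmodlt
        have hxe : x = y * C q0⁻¹ + C (-q0⁻¹) * (y % x) := by
          have : x = C q0⁻¹ * (y - y % x) := by
            have hxq : y - y % x = x * C q0 := by rw [← hqC]; linear_combination -e
            rw [hxq]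
            calc x = (C q0⁻¹ * C q0) * x := by rw [← C_mul, inv_mul_cancel₀ hq00]; simp
              _ = C q0⁻¹ * (x * C q0) := by ring
          conv_lhs => rw [this]
          rw [map_neg]; ring
        rw [hxe, hds.1, hds.2]
        refine ⟨by rw [degree_C (inv_ne_zero hq00)]; exact zero_le_coe_nat, ?_⟩
        exact qcf_smul_left (neg_ne_zero.2 (inv_ne_zero hq00)) hDrx
  · exact (qcf_swap_of_lt hy hx hgt).2 h


/-! ### The matrix layer -/

variable (K) in
abbrev SL2 := Matrix.SpecialLinearGroup (Fin 2) K[X]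

noncomputable def Um (f : K[X]) : SL2 K := ⟨!![1, f; 0, 1], by simp [Matrix.det_fin_two_of]⟩

noncomputable def Wm : SL2 K := ⟨!![0, 1; -1, 0], by simp [Matrix.det_fin_two_of]⟩

noncomputable def Wi : SL2 K := ⟨!![0, -1; 1, 0], by simp [Matrix.det_fin_two_of]⟩

lemma SL2.mul_val (A B : SL2 K) : (A * B).val = A.val * B.val := rfl

lemma SL2.one_val : (1 : SL2 K).val = 1 := rfl

lemma Um_mul (f g : K[X]) : Um f * Um g = Um (f + g) := by
  apply Subtype.ext
  rw [SL2.mul_val]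
  ext i j
  fin_cases i <;> fin_cases j <;>
    simp [Um, Matrix.mul_apply, Fin.sum_univ_two] <;> ring

lemma Um_zero : (Um 0 : SL2 K) = 1 := by
  apply Subtype.ext
  rw [SL2.one_val]
  ext i j
  fin_cases i <;> fin_cases j <;> simp [Um, Matrix.one_apply]

lemma Um_inv (f : K[X]) : (Um f)⁻¹ = Um (-f) := by
  apply inv_eq_of_mul_eq_one_right
  rw [Um_mul]
  rw [add_neg_cancel, Um_zero]

lemma Wm_mul_Wi : (Wm : SL2 K) * Wi = 1 := by
  apply Subtype.ext
  rw [SL2.mul_val, SL2.one_val]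
  ext i j
  fin_cases i <;> fin_cases j <;>
    simp [Wm, Wi, Matrix.mul_apply, Fin.sum_univ_two, Matrix.one_apply]

lemma Wi_mul_Wm : (Wi : SL2 K) * Wm = 1 := by
  apply Subtype.ext
  rw [SL2.mul_val, SL2.one_val]
  ext i j
  fin_cases i <;> fin_cases j <;>
    simp [Wm, Wi, Matrix.mul_apply, Fin.sum_univ_two, Matrix.one_apply]

lemma Wm_inv : (Wm : SL2 K)⁻¹ = Wi :=
  inv_eq_of_mul_eq_one_right Wm_mul_Wi

/-- The invariant: both rows have all continued-fraction partial quotients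
of degree at most `n`. -/
def Pinv (n : ℕ) (M : SL2 K) : Prop :=
  Qcf n (M.val 0 0) (M.val 0 1) ∧ Qcf n (M.val 1 0) (M.val 1 1)

lemma Pinv_one (n : ℕ) : Pinv n (1 : SL2 K) := by
  constructor
  · rw [SL2.one_val]
    simpa [Matrix.one_apply] using qcf_zero_right n (1 : K[X])
  · rw [SL2.one_val]
    simpa [Matrix.one_apply] using qcf_zero_left n (1 : K[X])

lemma mul_Um_val (M : SL2 K) (f : K[X]) (i : Fin 2) :
    (M * Um f).val i 0 = M.val i 0 ∧
      (M * Um f).val i 1 = M.val i 0 * f + M.val i 1 := by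
  rw [SL2.mul_val]
  constructor <;> simp [Um, Matrix.mul_apply, Fin.sum_univ_two]

lemma mul_Wm_val (M : SL2 K) (i : Fin 2) :
    (M * Wm).val i 0 = -(M.val i 1) ∧ (M * Wm).val i 1 = M.val i 0 := by
  rw [SL2.mul_val]
  constructor <;> simp [Wm, Matrix.mul_apply, Fin.sum_univ_two]

lemma mul_Wi_val (M : SL2 K) (i : Fin 2) :
    (M * Wi).val i 0 = M.val i 1 ∧ (M * Wi).val i 1 = -(M.val i 0) := by
  rw [SL2.mul_val]
  constructor <;> simp [Wi, Matrix.mul_apply, Fin.sum_univ_two]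

lemma qcf_neg_left {n : ℕ} {x y : K[X]} (h : Qcf n x y) : Qcf n (-x) y := by
  have := qcf_smul_left (neg_ne_zero.2 (one_ne_zero : (1:K) ≠ 0)) h
  simpa using this

lemma qcf_neg_right {n : ℕ} {x y : K[X]} (h : Qcf n x y) : Qcf n x (-y) := by
  have := qcf_smul_right (neg_ne_zero.2 (one_ne_zero : (1:K) ≠ 0)) h
  simpa using this

lemma Pinv_mul_Um {n : ℕ} {M : SL2 K} (h : Pinv n M) {f : K[X]}
    (hf : degree f ≤ (n : WithBot ℕ)) : Pinv n (M * Um f) := by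
  constructor
  · rw [(mul_Um_val M f 0).1, (mul_Um_val M f 0).2]
    have := qcf_addmul (c' := (1:K)) one_ne_zero hf h.1
    simpa using this
  · rw [(mul_Um_val M f 1).1, (mul_Um_val M f 1).2]
    have := qcf_addmul (c' := (1:K)) one_ne_zero hf h.2
    simpa using this

lemma Pinv_mul_Wm {n : ℕ} {M : SL2 K} (h : Pinv n M) : Pinv n (M * Wm) := by
  constructor
  · rw [(mul_Wm_val M 0).1, (mul_Wm_val M 0).2]
    exact qcf_neg_left (qcf_symm h.1)
  · rw [(mul_Wm_val M 1).1, (mul_Wm_val M 1).2]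
    exact qcf_neg_left (qcf_symm h.2)

lemma Pinv_mul_Wi {n : ℕ} {M : SL2 K} (h : Pinv n M) : Pinv n (M * Wi) := by
  constructor
  · rw [(mul_Wi_val M 0).1, (mul_Wi_val M 0).2]
    exact qcf_neg_right (qcf_symm h.1)
  · rw [(mul_Wi_val M 1).1, (mul_Wi_val M 1).2]
    exact qcf_neg_right (qcf_symm h.2)

/-- Generating sets of bounded degree. -/
def Sgen (n : ℕ) : Set (SL2 K) :=
  {Wm} ∪ {M | ∃ f : K[X], degree f ≤ (n : WithBot ℕ) ∧ M = Um f}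

lemma Sgen_mono {m n : ℕ} (h : m ≤ n) : (Sgen m : Set (SL2 K)) ⊆ Sgen n := by
  rintro M (hM | ⟨f, hf, rfl⟩)
  · exact Or.inl hM
  · exact Or.inr ⟨f, le_trans hf (by exact_mod_cast h), rfl⟩

lemma Wm_mem (n : ℕ) : (Wm : SL2 K) ∈ Subgroup.closure (Sgen n) :=
  Subgroup.subset_closure (Or.inl rfl)

lemma Um_mem {n : ℕ} {f : K[X]} (hf : degree f ≤ (n : WithBot ℕ)) :
    (Um f : SL2 K) ∈ Subgroup.closure (Sgen n) :=
  Subgroup.subset_closure (Or.inr ⟨f, hf, rfl⟩)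

/-- Every element of the closure of `Sgen n` satisfies the invariant. -/
lemma pinv_of_mem_closure {n : ℕ} {M : SL2 K}
    (hM : M ∈ Subgroup.closure (Sgen n)) : Pinv n M := by
  induction hM using Subgroup.closure_induction_right with
  | one => exact Pinv_one n
  | mul_right x hx y hy ih =>
    rcases hy with hy | ⟨f, hf, rfl⟩
    · rw [Set.mem_singleton_iff] at hy
      rw [hy]
      exact Pinv_mul_Wm ih
    · exact Pinv_mul_Um ih hf
  | mul_inv_cancel x hx y hy ih =>
    rcases hy with hy | ⟨f, hf, rfl⟩
    · rw [Set.mem_singleton_iff] at hy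
      rw [hy, Wm_inv]
      exact Pinv_mul_Wi ih
    · rw [Um_inv]
      exact Pinv_mul_Um ih (by rwa [degree_neg])

/-- Base case of generation: upper triangular matrices. -/
lemma base_mem {M : SL2 K} (hc : M.val 1 0 = 0) :
    ∃ n, M ∈ Subgroup.closure (Sgen n) := by
  set a := M.val 0 0 with ha
  set b := M.val 0 1 with hb
  set d := M.val 1 1 with hd
  have hdet : a * d = 1 := by
    have h2 := M.2
    rw [Matrix.det_fin_two] at h2
    rw [← ha, ← hb, ← hd, hc] at h2
    linear_combination h2
  have hda : IsUnit d := IsUnit.of_mul_eq_one (a := d) a (by linear_combination hdet)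
  have hau : IsUnit a := IsUnit.of_mul_eq_one (a := a) d hdet
  have hdeg_a : degree a = 0 := isUnit_iff_degree_eq_zero.1 hau
  have hdeg_d : degree d = 0 := isUnit_iff_degree_eq_zero.1 hda
  refine ⟨natDegree b, ?_⟩
  have hM : M = Um a * Wm * Um d * Wi * Um a * Wi * Um (d * b) := by
    apply Subtype.ext
    have hMeta : M.val = !![a, b; 0, d] := by
      rw [ha, hb, hd, ← hc]
      exact Matrix.eta_fin_two M.val
    rw [hMeta]
    rw [SL2.mul_val, SL2.mul_val, SL2.mul_val, SL2.mul_val, SL2.mul_val, SL2.mul_val]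
    simp only [Um, Wm, Wi]
    refine Matrix.ext fun i j => ?_
    fin_cases i <;> fin_cases j <;>
      simp [Matrix.mul_apply, Fin.sum_univ_two]
    · exact Or.inl (by linear_combination -hdet)
    · linear_combination (a * b * d - b - 1) * hdet
    · linear_combination hdet
    · exact Or.inl (by linear_combination -hdet)
  rw [hM]
  have h0n : (0 : WithBot ℕ) ≤ (natDegree b : WithBot ℕ) := zero_le_coe_nat
  refine mul_mem (mul_mem (mul_mem (mul_mem (mul_mem (mul_mem
    (Um_mem (by rw [hdeg_a]; exact h0n)) (Wm_mem _))
    (Um_mem (by rw [hdeg_d]; exact h0n)))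
    (by rw [← Wm_inv]; exact inv_mem (Wm_mem _)))
    (Um_mem (by rw [hdeg_a]; exact h0n)))
    (by rw [← Wm_inv]; exact inv_mem (Wm_mem _)))
    (Um_mem ?_)
  calc degree (d * b) = degree d + degree b := degree_mul
    _ = degree b := by rw [hdeg_d, zero_add]
    _ ≤ (natDegree b : WithBot ℕ) := degree_le_natDegree

/-- Every element of `SL₂(K[X])` lies in the subgroup generated by some `Sgen n`. -/
lemma exists_mem_closure (M : SL2 K) : ∃ n, M ∈ Subgroup.closure (Sgen n) := by
  suffices H : ∀ (k : ℕ) (M : SL2 K), natDegree (M.val 1 0) = k →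
      ∃ n, M ∈ Subgroup.closure (Sgen n) from H _ M rfl
  intro k
  induction k using Nat.strong_induction_on with
  | _ k IH =>
    intro M hk
    by_cases hc : M.val 1 0 = 0
    · exact base_mem hc
    · set a := M.val 0 0 with ha
      set c := M.val 1 0 with hcc
      set q := a / c with hq
      set M'' := Wm * Um (-q) * M with hM''
      have e := EuclideanDomain.div_add_mod a c
      have h10 : M''.val 1 0 = -(a % c) := by
        rw [hM'', SL2.mul_val, SL2.mul_val]
        simp [Um, Wm, Matrix.mul_apply, Fin.sum_univ_two, ← ha, ← hcc]
        first
          | linear_combination e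
          | linear_combination -e
          | ring
      have hrec : ∃ n'', M'' ∈ Subgroup.closure (Sgen n'') := by
        rcases eq_or_ne (a % c) 0 with hz | hz
        · exact base_mem (by rw [h10, hz, neg_zero])
        · have hlt : natDegree (M''.val 1 0) < k := by
            rw [h10, natDegree_neg]
            exact hk ▸ natDegree_lt_natDegree hz (EuclideanDomain.mod_lt _ hc)
          exact IH _ hlt M'' rfl
      obtain ⟨n'', hn''⟩ := hrec
      refine ⟨max (natDegree q) n'', ?_⟩
      have h1 : (Wi : SL2 K) * Wm = 1 := Wi_mul_Wm
      have h2 : (Um q : SL2 K) * Um (-q) = 1 := by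
        rw [Um_mul, add_neg_cancel, Um_zero]
      have hM : M = Um q * Wi * M'' := by
        rw [hM'', ← mul_assoc, ← mul_assoc, mul_assoc (Um q) Wi Wm, h1, mul_one, h2, one_mul]
      rw [hM]
      refine mul_mem (mul_mem ?_ ?_) ?_
      · refine Um_mem (le_trans degree_le_natDegree ?_)
        exact_mod_cast le_max_left (natDegree q) n''
      · rw [← Wm_inv]
        exact inv_mem (Wm_mem _)
      · exact Subgroup.closure_mono (Sgen_mono (le_max_right _ _)) hn''

end Sl2NotFG

open Sl2NotFG in
/-- For `A = Fq[T]`, the group `SL₂(A)` is not finitely generated. -/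
theorem sl2_polynomial_not_fg (Fq : Type*) [Field Fq] [Fintype Fq] :
    ¬ Group.FG (Matrix.SpecialLinearGroup (Fin 2) (Polynomial Fq)) := by
  intro hFG
  obtain ⟨Sfin, hS⟩ := Group.fg_def.mp hFG
  choose f hf using (exists_mem_closure (K := Fq))
  set N := Sfin.sup f with hN
  have hsub : ∀ s ∈ Sfin, s ∈ Subgroup.closure (Sgen N) := fun s hs =>
    Subgroup.closure_mono (Sgen_mono (Finset.le_sup hs)) (hf s)
  have htop : (⊤ : Subgroup (SL2 Fq)) ≤ Subgroup.closure (Sgen N) := by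
    rw [← hS]
    exact Subgroup.closure_le _ |>.2 (fun s hs => hsub s hs)
  have hmem : (Um (X ^ (N + 1)) : SL2 Fq) ∈ Subgroup.closure (Sgen N) :=
    htop (Subgroup.mem_top _)
  have hP := (pinv_of_mem_closure hmem).1
  have he0 : (Um (X ^ (N + 1)) : SL2 Fq).val 0 0 = 1 := by simp [Um]
  have he1 : (Um (X ^ (N + 1)) : SL2 Fq).val 0 1 = X ^ (N + 1) := by simp [Um]
  rw [he0, he1] at hP
  have := (qcf_const one_ne_zero natDegree_one (pow_ne_zero _ X_ne_zero)).1 hP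
  rw [degree_X_pow] at this
  exact absurd this (by exact_mod_cast Nat.not_succ_le_self N)
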